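/- Let η̃ : ℝ → ℝ be C¹ with η̃' bounded and uniformly continuous. Then the map Ã : D¹(ℝ^d) → ℝ, Ã(φ) = ⨍_D η̃(√u + φ) dz, is continuously Fréchet differentiable, with differential Ã'(φ)ψ = ⨍_D η̃'(√u + φ) ψ dz. -/

import Mathlib

open MeasureTheory Filter Set

section Aux

variable {α : Type*} [MeasurableSpace α] {μ : Measure α} [IsProbabilityMeasure μ]

private theorem aux_norm_le_of_ae_bound (D b : Lp ℝ 2 μ) (F : α → ℝ) (hD : ⇑D =ᵐ[μ] F)
    (ε c : ℝ) (hε : 0 ≤ ε) (hc : 0 ≤ c)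
    (hbd : ∀ᵐ x ∂μ, |F x| ≤ ε + c * |b x|) : ‖D‖ ≤ ε + c * ‖b‖ := by
  have hb : AEStronglyMeasurable (fun x => c * |b x|) μ :=
    (Lp.aestronglyMeasurable b).norm.const_mul c |>.congr (by
      simp [Real.norm_eq_abs])
  have h1 : eLpNorm F 2 μ ≤ eLpNorm (fun x => ε + c * |b x|) 2 μ := by
    refine eLpNorm_mono_ae ?_
    filter_upwards [hbd] with x hx
    rw [Real.norm_eq_abs, Real.norm_eq_abs]
    exact hx.trans (le_abs_self _)
  have h2 : eLpNorm (fun x => ε + c * |b x|) 2 μ ≤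
      eLpNorm (fun _ : α => ε) 2 μ + eLpNorm (fun x => c * |b x|) 2 μ :=
    eLpNorm_add_le aestronglyMeasurable_const hb (by norm_num)
  have h3 : eLpNorm (fun _ : α => ε) 2 μ = ENNReal.ofReal ε := by
    rw [eLpNorm_const _ (by norm_num) (NeZero.ne μ)]
    simp [Real.enorm_eq_ofReal hε]
  have h4 : eLpNorm (fun x => c * |b x|) 2 μ = ENNReal.ofReal c * eLpNorm (⇑b) 2 μ := by
    have hs : (fun x => c * |b x|) = c • (fun x => ‖b x‖) := by
      funext x; simp [Real.norm_eq_abs]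
    rw [hs, eLpNorm_const_smul, eLpNorm_norm]
    congr 1
    simp [Real.enorm_eq_ofReal hc]
  rw [Lp.norm_def, Lp.norm_def, eLpNorm_congr_ae hD]
  have hfin : eLpNorm (fun _ : α => ε) 2 μ + eLpNorm (fun x => c * |b x|) 2 μ ≠ ⊤ := by
    rw [h3, h4]
    exact ENNReal.add_ne_top.mpr ⟨ENNReal.ofReal_ne_top,
      ENNReal.mul_ne_top ENNReal.ofReal_ne_top (Lp.eLpNorm_ne_top b)⟩
  calc (eLpNorm F 2 μ).toReal ≤ (eLpNorm (fun _ : α => ε) 2 μ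
        + eLpNorm (fun x => c * |b x|) 2 μ).toReal :=
        ENNReal.toReal_mono hfin (h1.trans h2)
    _ = ε + c * (eLpNorm (⇑b) 2 μ).toReal := by
        rw [h3, h4, ENNReal.toReal_add ENNReal.ofReal_ne_top
          (ENNReal.mul_ne_top ENNReal.ofReal_ne_top (Lp.eLpNorm_ne_top b)),
          ENNReal.toReal_mul, ENNReal.toReal_ofReal hε, ENNReal.toReal_ofReal hc]

private theorem aux_int_abs_le_norm (ψ : Lp ℝ 2 μ) : ∫ x, |ψ x| ∂μ ≤ ‖ψ‖ := by
  have h1 : eLpNorm ψ 1 μ ≤ eLpNorm ψ 2 μ :=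
    eLpNorm_le_eLpNorm_of_exponent_le (by norm_num) (Lp.aestronglyMeasurable ψ)
  rw [Lp.norm_def]
  calc ∫ x, |ψ x| ∂μ = (eLpNorm ψ 1 μ).toReal := by
        rw [eLpNorm_one_eq_lintegral_enorm, ← integral_norm_eq_lintegral_enorm
          (Lp.aestronglyMeasurable ψ)]
        simp [Real.norm_eq_abs]
    _ ≤ _ := ENNReal.toReal_mono (Lp.eLpNorm_ne_top ψ) h1

private theorem aux_int_sq (ψ : Lp ℝ 2 μ) : ∫ x, ψ x * ψ x ∂μ = ‖ψ‖ ^ 2 := by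
  rw [← real_inner_self_eq_norm_sq, MeasureTheory.L2.inner_def]
  simp [RCLike.inner_apply]
  simp only [sq]

end Aux

private theorem aux_eta_lipschitz (eta : ℝ → ℝ) (heta : ContDiff ℝ 1 eta)
    (K : ℝ) (hK : ∀ x : ℝ, |deriv eta x| ≤ K) (a b : ℝ) :
    |eta a - eta b| ≤ K * |a - b| := by
  have hK0 : 0 ≤ K := le_trans (abs_nonneg _) (hK 0)
  have hl : LipschitzWith K.toNNReal eta := by
    refine lipschitzWith_of_nnnorm_deriv_le (heta.differentiable one_ne_zero) fun x => ?_
    rw [← NNReal.coe_le_coe, coe_nnnorm, Real.coe_toNNReal _ hK0, Real.norm_eq_abs]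
    exact hK x
  have := hl.dist_le_mul a b
  rwa [Real.dist_eq, Real.dist_eq, Real.coe_toNNReal _ hK0] at this

private theorem aux_deriv_diff_bound (eta : ℝ → ℝ)
    (K : ℝ) (hK : ∀ x : ℝ, |deriv eta x| ≤ K) (ε ρ : ℝ) (hρ : 0 < ρ)
    (hmod : ∀ s t : ℝ, |s - t| ≤ ρ → |deriv eta s - deriv eta t| ≤ ε) (s t : ℝ) :
    |deriv eta s - deriv eta t| ≤ ε + (2 * K / ρ) * |s - t| := by
  have hK0 : 0 ≤ K := le_trans (abs_nonneg _) (hK 0)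
  have hε0 : 0 ≤ ε := by simpa using hmod s s (by simp [hρ.le])
  rcases le_or_gt (|s - t|) ρ with h | h
  · have := hmod s t h
    nlinarith [abs_nonneg (s - t), div_nonneg (by linarith : (0:ℝ) ≤ 2 * K) hρ.le]
  · have h1 : |deriv eta s - deriv eta t| ≤ 2 * K := by
      calc |deriv eta s - deriv eta t| ≤ |deriv eta s| + |deriv eta t| := abs_sub _ _
        _ ≤ 2 * K := by linarith [hK s, hK t]
    have h2 : 2 * K = (2 * K / ρ) * ρ := by field_simp
    nlinarith [mul_le_mul_of_nonneg_left h.le (div_nonneg (by linarith : (0:ℝ) ≤ 2*K) hρ.le)]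

private theorem aux_remainder_bound (eta : ℝ → ℝ) (heta : ContDiff ℝ 1 eta)
    (K : ℝ) (hK : ∀ x : ℝ, |deriv eta x| ≤ K) (ε ρ : ℝ) (hρ : 0 < ρ)
    (hmod : ∀ s t : ℝ, |s - t| ≤ ρ → |deriv eta s - deriv eta t| ≤ ε) (a t : ℝ) :
    |eta (a + t) - eta a - deriv eta a * t| ≤ (ε + (2 * K / ρ) * |t|) * |t| := by
  have hK0 : 0 ≤ K := le_trans (abs_nonneg _) (hK 0)
  have hε0 : 0 ≤ ε := by simpa using hmod a a (by simp [hρ.le])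
  rcases le_or_gt (|t|) ρ with h | h
  · -- MVT on the segment
    have hd : ∀ s : ℝ, HasDerivAt (fun s : ℝ => eta (a + s * t) - s * (deriv eta a * t))
        (deriv eta (a + s * t) * t - deriv eta a * t) s := by
      intro s
      have h1 : HasDerivAt (fun s : ℝ => a + s * t) t s := by
        simpa using ((hasDerivAt_id s).mul_const t).const_add a
      have h2 : HasDerivAt eta (deriv eta (a + s * t)) (a + s * t) :=
        ((heta.differentiable one_ne_zero) _).hasDerivAt
      exact (h2.comp s h1 |>.congr_deriv (by ring)).sub (hasDerivAt_mul_const _)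
    have key := norm_image_sub_le_of_norm_deriv_le_segment_01'
      (f := fun s : ℝ => eta (a + s * t) - s * (deriv eta a * t))
      (f' := fun s : ℝ => deriv eta (a + s * t) * t - deriv eta a * t)
      (C := ε * |t|)
      (fun s _ => (hd s).hasDerivWithinAt)
      (fun s hs => by
        show ‖deriv eta (a + s * t) * t - deriv eta a * t‖ ≤ ε * |t|
        rw [Real.norm_eq_abs, ← sub_mul, abs_mul]
        refine mul_le_mul_of_nonneg_right ?_ (abs_nonneg t)
        refine hmod _ _ ?_
        have : a + s * t - a = s * t := by ring
        rw [this, abs_mul, abs_of_nonneg hs.1]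
        calc s * |t| ≤ 1 * |t| := by
              exact mul_le_mul_of_nonneg_right hs.2.le (abs_nonneg t)
          _ ≤ ρ := by linarith
        )
    simp only [one_mul, zero_mul, add_zero, sub_zero, Real.norm_eq_abs, mul_zero] at key
    rw [show eta (a + t) - deriv eta a * t - eta a
        = eta (a + t) - eta a - deriv eta a * t from by ring] at key
    nlinarith [abs_nonneg t, div_nonneg (by linarith : (0:ℝ) ≤ 2*K) hρ.le, sq_nonneg (|t|)]
  · have h1 : |eta (a + t) - eta a| ≤ K * |t| := by
      simpa using aux_eta_lipschitz eta heta K hK (a + t) a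
    have h2 : |deriv eta a * t| ≤ K * |t| := by
      rw [abs_mul]; exact mul_le_mul_of_nonneg_right (hK a) (abs_nonneg t)
    have h3 : |eta (a + t) - eta a - deriv eta a * t| ≤ 2 * K * |t| := by
      calc |eta (a + t) - eta a - deriv eta a * t|
          ≤ |eta (a + t) - eta a| + |deriv eta a * t| := abs_sub _ _
        _ ≤ 2 * K * |t| := by linarith
    have h4 : 2 * K * |t| ≤ (2 * K / ρ) * |t| * |t| := by
      rw [div_mul_eq_mul_div, div_mul_eq_mul_div, le_div_iff₀ hρ]
      nlinarith [mul_nonneg (mul_nonneg (by linarith : (0:ℝ) ≤ 2*K) (abs_nonneg t))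
        (by linarith : (0:ℝ) ≤ |t| - ρ)]
    nlinarith [abs_nonneg t]

private theorem aux_modulus (eta : ℝ → ℝ) (hucont : UniformContinuous (deriv eta))
    (ε : ℝ) (hε : 0 < ε) :
    ∃ ρ > 0, ∀ s t : ℝ, |s - t| ≤ ρ → |deriv eta s - deriv eta t| ≤ ε := by
  rcases Metric.uniformContinuous_iff.mp hucont ε hε with ⟨δ, hδ, hd⟩
  refine ⟨δ / 2, by linarith, fun s t h => ?_⟩
  have : dist s t < δ := by rw [Real.dist_eq]; linarith
  have := hd this
  rw [Real.dist_eq] at this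
  linarith

theorem Atilde_c1_frechet
    (α : Type*) [MeasurableSpace α] (μ : Measure α) [IsProbabilityMeasure μ]
    (eta : ℝ → ℝ) (heta : ContDiff ℝ 1 eta)
    (K : ℝ) (hK : ∀ x : ℝ, |deriv eta x| ≤ K)
    (hucont : UniformContinuous (deriv eta))
    (u : ℝ) (hu : 0 ≤ u) :
    ∃ A' : Lp ℝ 2 μ → (Lp ℝ 2 μ →L[ℝ] ℝ),
      Continuous A' ∧
      ∀ f : Lp ℝ 2 μ,
        HasFDerivAt (fun g : Lp ℝ 2 μ => ∫ x, eta (Real.sqrt u + g x) ∂μ) (A' f) f ∧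
        ∀ ψ : Lp ℝ 2 μ, A' f ψ = ∫ x, deriv eta (Real.sqrt u + f x) * ψ x ∂μ := by
  have hK0 : 0 ≤ K := le_trans (abs_nonneg _) (hK 0)
  set c : ℝ := Real.sqrt u with hcdef
  have hmem : ∀ f : Lp ℝ 2 μ, MemLp (fun x => deriv eta (c + f x)) 2 μ := by
    intro f
    refine MemLp.of_bound ?_ K ?_
    · exact (heta.continuous_deriv le_rfl).comp_aestronglyMeasurable
        ((Lp.aestronglyMeasurable f).const_add c)
    · exact Eventually.of_forall fun x => by simpa using hK _
  set G : Lp ℝ 2 μ → Lp ℝ 2 μ := fun f => (hmem f).toLp _ with hGdef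
  have hGcoe : ∀ f : Lp ℝ 2 μ, ⇑(G f) =ᵐ[μ] fun x => deriv eta (c + f x) :=
    fun f => (hmem f).coeFn_toLp
  -- integrability of the composed function
  have hIntf : ∀ f : Lp ℝ 2 μ, Integrable (fun x => f x) μ :=
    fun f => ((Lp.memLp f).mono_exponent (by norm_num)).integrable le_rfl
  have hInt : ∀ f : Lp ℝ 2 μ, Integrable (fun x => eta (c + f x)) μ := by
    intro f
    refine Integrable.mono' ((integrable_const (|eta c|)).add ((hIntf f).abs.const_mul K)) ?_ ?_
    · exact heta.continuous.comp_aestronglyMeasurable ((Lp.aestronglyMeasurable f).const_add c)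
    · refine Eventually.of_forall fun x => ?_
      have h1 := aux_eta_lipschitz eta heta K hK (c + f x) c
      have h2 : |c + f x - c| = |f x| := by ring_nf
      rw [h2] at h1
      have h3 : |eta (c + f x)| - |eta c| ≤ |eta (c + f x) - eta c| :=
        abs_sub_abs_le_abs_sub _ _
      simp only [Real.norm_eq_abs, Pi.add_apply]
      linarith
  have hIntMul : ∀ f ψ : Lp ℝ 2 μ, Integrable (fun x => deriv eta (c + f x) * ψ x) μ := by
    intro f ψ
    have h := L2.integrable_inner (𝕜 := ℝ) (G f) ψ
    simp only [RCLike.inner_apply, starRingEnd_apply, star_trivial] at h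
    refine h.congr ?_
    filter_upwards [hGcoe f] with x hx
    rw [hx, mul_comm]
  have hApply : ∀ f ψ : Lp ℝ 2 μ, innerSL ℝ (G f) ψ = ∫ x, deriv eta (c + f x) * ψ x ∂μ := by
    intro f ψ
    have : (innerSL ℝ (G f)) ψ = @inner ℝ _ _ (G f) ψ := rfl
    rw [this, MeasureTheory.L2.inner_def]
    simp only [RCLike.inner_apply, starRingEnd_apply, star_trivial]
    refine integral_congr_ae ?_
    filter_upwards [hGcoe f] with x hx
    rw [hx, mul_comm]
  -- key norm estimate for differences of G
  have hGdiff : ∀ (a b : Lp ℝ 2 μ) (ε ρ : ℝ), 0 < ρ → 0 ≤ ε →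
      (∀ s t : ℝ, |s - t| ≤ ρ → |deriv eta s - deriv eta t| ≤ ε) →
      ‖G a - G b‖ ≤ ε + (2 * K / ρ) * ‖a - b‖ := by
    intro a b ε ρ hρ hε hmod
    refine aux_norm_le_of_ae_bound (G a - G b) (a - b)
      (fun x => deriv eta (c + a x) - deriv eta (c + b x)) ?_ ε (2 * K / ρ) hε
      (div_nonneg (by linarith) hρ.le) ?_
    · filter_upwards [Lp.coeFn_sub (G a) (G b), hGcoe a, hGcoe b] with x h1 h2 h3
      rw [h1, Pi.sub_apply, h2, h3]
    · filter_upwards [Lp.coeFn_sub a b] with x h1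
      have := aux_deriv_diff_bound eta K hK ε ρ hρ hmod (c + a x) (c + b x)
      have h2 : c + a x - (c + b x) = a x - b x := by ring
      rw [h2] at this
      rw [h1, Pi.sub_apply]
      exact this
  refine ⟨fun f => innerSL ℝ (G f), ?_, fun f => ⟨?_, fun ψ => hApply f ψ⟩⟩
  · -- continuity of A'
    rw [Metric.continuous_iff]
    intro b ε hε
    obtain ⟨ρ, hρ, hmod⟩ := aux_modulus eta hucont (ε / 4) (by linarith)
    set d : ℝ := 2 * K / ρ with hddef
    have hd0 : 0 ≤ d := div_nonneg (by linarith) hρ.le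
    refine ⟨ε / (2 * (d + 1)), by positivity, fun a hab => ?_⟩
    have h1 : dist (innerSL ℝ (G a)) (innerSL ℝ (G b)) = ‖G a - G b‖ := by
      rw [dist_eq_norm, ← map_sub, innerSL_apply_norm]
    rw [h1]
    have h2 : ‖G a - G b‖ ≤ ε / 4 + d * ‖a - b‖ :=
      hGdiff a b (ε / 4) ρ hρ (by linarith) hmod
    have h3 : ‖a - b‖ < ε / (2 * (d + 1)) := by rwa [← dist_eq_norm]
    have h4 : d * ‖a - b‖ ≤ d * (ε / (2 * (d + 1))) :=
      mul_le_mul_of_nonneg_left h3.le hd0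
    have h5 : d * (ε / (2 * (d + 1))) ≤ ε / 2 := by
      rw [← mul_div_assoc, div_le_div_iff₀ (by positivity) (by norm_num : (0:ℝ) < 2)]
      nlinarith
    calc ‖G a - G b‖ ≤ ε / 4 + d * ‖a - b‖ := h2
      _ ≤ ε / 4 + ε / 2 := by linarith
      _ < ε := by linarith
  · -- differentiability
    rw [hasFDerivAt_iff_isLittleO_nhds_zero, Asymptotics.isLittleO_iff]
    intro C hC
    obtain ⟨ρ, hρ, hmod⟩ := aux_modulus eta hucont (C / 2) (by linarith)
    set d : ℝ := 2 * K / ρ with hddef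
    have hd0 : 0 ≤ d := div_nonneg (by linarith) hρ.le
    rw [Metric.eventually_nhds_iff]
    refine ⟨C / (2 * (d + 1)), by positivity, fun ψ hψ => ?_⟩
    rw [dist_zero_right] at hψ
    -- rewrite the difference as a single integral of the remainder
    have hInt1 : Integrable (fun x => eta (c + f x + ψ x)) μ := by
      refine (hInt (f + ψ)).congr ?_
      filter_upwards [Lp.coeFn_add f ψ] with x hx
      rw [hx, Pi.add_apply, add_assoc]
    have hEq1 : ∫ x, eta (c + (f + ψ) x) ∂μ = ∫ x, eta (c + f x + ψ x) ∂μ := by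
      refine integral_congr_ae ?_
      filter_upwards [Lp.coeFn_add f ψ] with x hx
      rw [hx, Pi.add_apply, add_assoc]
    have hIntD : Integrable (fun x => eta (c + f x + ψ x) - eta (c + f x)) μ :=
      hInt1.sub (hInt f)
    have hEq2 : ∫ x, eta (c + (f + ψ) x) ∂μ - ∫ x, eta (c + f x) ∂μ - (innerSL ℝ (G f)) ψ
        = ∫ x, (eta (c + f x + ψ x) - eta (c + f x) - deriv eta (c + f x) * ψ x) ∂μ := by
      rw [hEq1, hApply f ψ, ← integral_sub hInt1 (hInt f),
        ← integral_sub hIntD (hIntMul f ψ)]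
    rw [hEq2]
    -- bound the integral
    have hIntBound : Integrable (fun x => C / 2 * |ψ x| + d * (ψ x * ψ x)) μ := by
      refine (((hIntf ψ).abs.const_mul (C / 2)).add ?_)
      have h := L2.integrable_inner (𝕜 := ℝ) ψ ψ
      simp only [RCLike.inner_apply, starRingEnd_apply, star_trivial] at h
      exact h.const_mul d
    have hb : ‖∫ x, (eta (c + f x + ψ x) - eta (c + f x) - deriv eta (c + f x) * ψ x) ∂μ‖
        ≤ ∫ x, (C / 2 * |ψ x| + d * (ψ x * ψ x)) ∂μ := by
      refine norm_integral_le_of_norm_le hIntBound ?_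
      refine Eventually.of_forall fun x => ?_
      have h1 := aux_remainder_bound eta heta K hK (C / 2) ρ hρ hmod (c + f x) (ψ x)
      rw [Real.norm_eq_abs]
      calc |eta (c + f x + ψ x) - eta (c + f x) - deriv eta (c + f x) * ψ x|
          ≤ (C / 2 + d * |ψ x|) * |ψ x| := h1
        _ = C / 2 * |ψ x| + d * (|ψ x| * |ψ x|) := by ring
        _ = C / 2 * |ψ x| + d * (ψ x * ψ x) := by rw [abs_mul_abs_self]
    have hb2 : ∫ x, (C / 2 * |ψ x| + d * (ψ x * ψ x)) ∂μ ≤ C / 2 * ‖ψ‖ + d * ‖ψ‖ ^ 2 := by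
      rw [integral_add ((hIntf ψ).abs.const_mul (C / 2)) (by
        have h := L2.integrable_inner (𝕜 := ℝ) ψ ψ
        simp only [RCLike.inner_apply, starRingEnd_apply, star_trivial] at h
        exact h.const_mul d), integral_const_mul, integral_const_mul, aux_int_sq]
      have := aux_int_abs_le_norm ψ
      have hC2 : 0 ≤ C / 2 := by linarith
      nlinarith
    have hψδ : d * ‖ψ‖ ≤ C / 2 := by
      have : d * ‖ψ‖ ≤ d * (C / (2 * (d + 1))) := mul_le_mul_of_nonneg_left hψ.le hd0
      have h5 : d * (C / (2 * (d + 1))) ≤ C / 2 := by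
        rw [← mul_div_assoc, div_le_div_iff₀ (by positivity) (by norm_num : (0:ℝ) < 2)]
        nlinarith
      linarith
    have hnψ : (0:ℝ) ≤ ‖ψ‖ := norm_nonneg _
    calc ‖∫ x, (eta (c + f x + ψ x) - eta (c + f x) - deriv eta (c + f x) * ψ x) ∂μ‖
        ≤ C / 2 * ‖ψ‖ + d * ‖ψ‖ ^ 2 := hb.trans hb2
      _ ≤ C / 2 * ‖ψ‖ + C / 2 * ‖ψ‖ := by nlinarith
      _ = C * ‖ψ‖ := by ring
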